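/- Variance bound for the bag-level estimator: under the same setup, Var(ℓ_b) ≤ (5/2)·E_x[(f₂(h(x)))²], where the bound is independent of the bag size k. -/

import Mathlib

open MeasureTheory

set_option maxHeartbeats 1000000

/-- Variance bound for the bag-level estimator, independent of the bag size. -/
theorem bag_estimator_variance
    {X : Type*} [MeasurableSpace X]
    (μ : Measure (X × ℝ)) [IsProbabilityMeasure μ]
    (k : ℕ) (hk : 1 ≤ k)
    (f₁ f₂ : ℝ → ℝ) (h : X → ℝ)
    (hy : ∀ᵐ z ∂μ, z.2 ∈ ({0, 1} : Set ℝ))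
    (hf₁ : Integrable (fun z : X × ℝ => f₁ (h z.1)) μ)
    (hf₂ : MemLp (fun z : X × ℝ => f₂ (h z.1)) 2 μ)
    (p Ef1 Ef2 : ℝ)
    (hp : p = ∫ z, z.2 ∂μ)
    (hEf1 : Ef1 = ∫ z, f₁ (h z.1) ∂μ)
    (hEf2 : Ef2 = ∫ z, f₂ (h z.1) ∂μ)
    (ℓb : (Fin k → X × ℝ) → ℝ)
    (hℓb : ∀ ω, ℓb ω = Ef1 + p * Ef2
        + ((1 / (k : ℝ)) * ∑ i, (ω i).2 - p)
          * ((∑ i, f₂ (h ((ω i).1))) - (k : ℝ) * Ef2)) :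
    ∫ ω, (ℓb ω - ∫ ω', ℓb ω' ∂(Measure.pi fun _ : Fin k => μ)) ^ 2
        ∂(Measure.pi fun _ : Fin k => μ)
      ≤ 5 / 2 * ∫ z, (f₂ (h z.1)) ^ 2 ∂μ := by
  have hk0 : (k : ℝ) ≠ 0 := by positivity
  set π : Measure (Fin k → X × ℝ) := Measure.pi fun _ : Fin k => μ with hπ
  haveI : IsProbabilityMeasure π := by rw [hπ]; infer_instance
  -- basic objects
  set g : X × ℝ → ℝ := fun z => f₂ (h z.1) with hg_def
  set u : X × ℝ → ℝ := fun z => g z - Ef2 with hu_def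
  set v : X × ℝ → ℝ := fun z => max 0 (min z.2 1) - p with hv_def
  -- facts about y and p
  have hy01 : ∀ᵐ z ∂μ, z.2 = 0 ∨ z.2 = 1 := by
    filter_upwards [hy] with z hz; simpa using hz
  have hyb : ∀ᵐ z ∂μ, ‖z.2‖ ≤ 1 := by
    filter_upwards [hy01] with z hz
    rcases hz with hz | hz <;> simp [hz]
  have hyint : Integrable (fun z : X × ℝ => z.2) μ :=
    Integrable.mono' (integrable_const 1) measurable_snd.aestronglyMeasurable hyb
  have hp0 : 0 ≤ p := by
    rw [hp]; apply integral_nonneg_of_ae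
    filter_upwards [hy01] with z hz; rcases hz with hz | hz <;> simp [hz]
  have hp1 : p ≤ 1 := by
    rw [hp]
    calc ∫ z, z.2 ∂μ ≤ ∫ _z, (1 : ℝ) ∂μ := by
          apply integral_mono_ae hyint (integrable_const 1)
          filter_upwards [hy01] with z hz; rcases hz with hz | hz <;> simp [hz]
      _ = 1 := by simp
  -- facts about v
  have hvmeas : Measurable v := by
    simp only [hv_def]
    exact (measurable_const.max (measurable_snd.min measurable_const)).sub measurable_const
  have hvb : ∀ z, |v z| ≤ 1 := by
    intro z
    rw [abs_le]
    constructor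
    · simp only [hv_def]; nlinarith [le_max_left (0:ℝ) (min z.2 1), le_max_right (0:ℝ) (min z.2 1)]
    · simp only [hv_def]
      have h1 : max 0 (min z.2 1) ≤ 1 := by
        apply max_le (by norm_num) (min_le_right _ _)
      linarith
  have hveq : ∀ᵐ z ∂μ, v z = z.2 - p := by
    filter_upwards [hy01] with z hz
    rcases hz with hz | hz <;> simp [hv_def, hz]
  have hv_int : Integrable v μ := by
    apply Integrable.mono' (integrable_const 1) hvmeas.aestronglyMeasurable
    exact Filter.Eventually.of_forall fun z => by simpa using hvb z
  have hv0 : ∫ z, v z ∂μ = 0 := by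
    rw [integral_congr_ae hveq, integral_sub hyint (integrable_const p)]
    simp [hp]
  have hvv_int : Integrable (fun z => v z * v z) μ := by
    apply Integrable.mono' (integrable_const 1) (hvmeas.mul hvmeas).aestronglyMeasurable
    exact Filter.Eventually.of_forall fun z => by
      have := hvb z
      rw [Real.norm_eq_abs, Pi.mul_apply, abs_mul]
      nlinarith [abs_nonneg (v z)]
  have hvv : ∫ z, v z * v z ∂μ ≤ 1 / 4 := by
    have hae : (fun z => v z * v z) =ᵐ[μ] fun z : X × ℝ => z.2 * (1 - 2 * p) + p ^ 2 := by
      filter_upwards [hy01, hveq] with z hz hvz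
      rcases hz with hz | hz <;> rw [hvz, hz] <;> ring
    rw [integral_congr_ae hae, integral_add (hyint.mul_const _) (integrable_const _),
      integral_mul_const]
    simp only [integral_const, measure_univ, probReal_univ, ENNReal.toReal_one, smul_eq_mul, one_mul, ← hp]
    nlinarith [sq_nonneg (2 * p - 1)]
  -- facts about u
  have hgm : AEStronglyMeasurable g μ := hf₂.aestronglyMeasurable
  have hgint : Integrable g μ := hf₂.integrable one_le_two
  have hg2int : Integrable (fun z => g z ^ 2) μ := hf₂.integrable_sq
  have humem : MemLp u 2 μ := hf₂.sub (memLp_const Ef2)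
  have huint : Integrable u μ := humem.integrable one_le_two
  have hu0 : ∫ z, u z ∂μ = 0 := by
    simp only [hu_def]
    rw [integral_sub hgint (integrable_const _)]
    simp [hEf2, hg_def]
  have huu_int : Integrable (fun z => u z * u z) μ := by
    have := humem.integrable_sq
    simpa [sq] using this
  set σ2 : ℝ := ∫ z, u z * u z ∂μ with hσ2_def
  have hσ2_nonneg : 0 ≤ σ2 := integral_nonneg fun z => mul_self_nonneg _
  have hσ2_le : σ2 ≤ ∫ z, g z ^ 2 ∂μ := by
    have hae : (fun z => u z * u z) =ᵐ[μ] fun z => g z ^ 2 - 2 * Ef2 * g z + Ef2 ^ 2 :=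
      Filter.Eventually.of_forall fun z => by simp only [hu_def]; ring
    have hA : Integrable (fun z => g z ^ 2 - 2 * Ef2 * g z) μ := hg2int.sub (hgint.const_mul _)
    rw [hσ2_def, integral_congr_ae hae, integral_add hA (integrable_const _),
      integral_sub hg2int (hgint.const_mul _), integral_const_mul]
    simp only [integral_const, measure_univ, probReal_univ, ENNReal.toReal_one, smul_eq_mul, one_mul, ← hEf2]
    have : (0:ℝ) ≤ Ef2 ^ 2 := sq_nonneg _
    simp only [hg_def, ← hEf2]
    nlinarith
  -- v * u
  have hvu_int : Integrable (fun z => v z * u z) μ :=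
    huint.bdd_mul (c := 1) hvmeas.aestronglyMeasurable (Filter.Eventually.of_forall fun z => by simpa using hvb z)
  have hvu_mem : MemLp (fun z => v z * u z) 2 μ := by
    apply MemLp.of_le humem (hvmeas.aestronglyMeasurable.mul humem.aestronglyMeasurable)
    apply Filter.Eventually.of_forall fun z => ?_
    simp only [Real.norm_eq_abs, Pi.mul_apply, abs_mul]
    nlinarith [hvb z, abs_nonneg (u z), abs_nonneg (v z)]
  set ρ : ℝ := ∫ z, v z * u z ∂μ with hρ_def
  have hvvuu_int : Integrable (fun z => v z * v z * (u z * u z)) μ := by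
    apply Integrable.bdd_mul (c := 1) huu_int (hvmeas.mul hvmeas).aestronglyMeasurable
    refine Filter.Eventually.of_forall (fun z => ?_)
    rw [Real.norm_eq_abs, Pi.mul_apply, abs_mul]
    nlinarith [hvb z, abs_nonneg (v z)]
  set τ4 : ℝ := ∫ z, v z * v z * (u z * u z) ∂μ with hτ4_def
  have hτ4_le : τ4 ≤ σ2 := by
    rw [hτ4_def, hσ2_def]
    apply integral_mono_ae hvvuu_int huu_int
    apply Filter.Eventually.of_forall fun z => ?_
    show v z * v z * (u z * u z) ≤ u z * u z
    have h1 : v z * v z ≤ 1 := by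
      have := abs_le.mp (hvb z); nlinarith
    nlinarith [mul_self_nonneg (u z)]
  have hρ2 : ρ ^ 2 ≤ σ2 := by
    have h1 := ProbabilityTheory.variance_nonneg (fun z => v z * u z) μ
    have h2 := ProbabilityTheory.variance_eq_sub hvu_mem
    simp only [Pi.pow_apply] at h2
    rw [h2] at h1
    have h3 : ∫ z, (v z * u z) ^ 2 ∂μ = τ4 := by
      rw [hτ4_def]; congr 1; funext z; ring
    rw [h3] at h1
    have h4 : ∫ z, v z * u z ∂μ = ρ := hρ_def.symm
    rw [h4] at h1
    nlinarith
  -- measure space trick for Fubini on pi measures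
  letI : MeasureSpace (X × ℝ) := ⟨μ⟩
  haveI : SigmaFinite (volume : Measure (X × ℝ)) := by show SigmaFinite μ; infer_instance
  -- the per-coordinate factor functions
  set Φ : Fin k → Fin k → Fin k → Fin k → Fin k → (X × ℝ) → ℝ := fun a b c d e z =>
    (if e = a then v z else 1) * (if e = b then v z else 1) *
      ((if e = c then u z else 1) * (if e = d then u z else 1)) with hΦ_def
  have hΦint : ∀ a b c d e, Integrable (Φ a b c d e) μ := by
    intro a b c d e
    have hmulv : ∀ {f : X × ℝ → ℝ}, Integrable f μ → Integrable (fun z => v z * f z) μ :=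
      fun hf => hf.bdd_mul (c := 1) hvmeas.aestronglyMeasurable (Filter.Eventually.of_forall fun z => by simpa using hvb z)
    show Integrable (fun z => (if e = a then v z else 1) * (if e = b then v z else 1) *
      ((if e = c then u z else 1) * (if e = d then u z else 1))) μ
    split_ifs <;>
      (try simp only [mul_one, one_mul]) <;>
      first
        | exact integrable_const 1
        | exact huint
        | exact huu_int
        | exact hv_int
        | exact hvu_int
        | exact hvv_int
        | exact hvvuu_int
        | { try simp only [mul_assoc]
            first
              | exact hmulv (hmulv huu_int)
              | exact hmulv (hmulv huint)
              | exact hmulv huu_int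
              | exact hmulv huint
              | exact hmulv hv_int }
  have hrep : ∀ a b c d (ω : Fin k → X × ℝ),
      v (ω a) * v (ω b) * (u (ω c) * u (ω d)) = ∏ e, Φ a b c d e (ω e) := by
    intro a b c d ω
    show _ = ∏ e, ((if e = a then v (ω e) else 1) * (if e = b then v (ω e) else 1) *
      ((if e = c then u (ω e) else 1) * (if e = d then u (ω e) else 1)))
    rw [Finset.prod_mul_distrib, Finset.prod_mul_distrib, Finset.prod_mul_distrib]
    simp [Finset.prod_ite_eq']
  have hTint : ∀ a b c d,
      Integrable (fun ω : Fin k → X × ℝ => v (ω a) * v (ω b) * (u (ω c) * u (ω d))) π := by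
    intro a b c d
    have h1 : (fun ω : Fin k → X × ℝ => v (ω a) * v (ω b) * (u (ω c) * u (ω d)))
        = fun ω => ∏ e, Φ a b c d e (ω e) := funext (hrep a b c d)
    rw [h1]
    exact Integrable.fintype_prod (𝕜 := ℝ) fun e => hΦint a b c d e
  have hTval : ∀ a b c d,
      ∫ ω, v (ω a) * v (ω b) * (u (ω c) * u (ω d)) ∂π = ∏ e, ∫ z, Φ a b c d e z ∂μ := by
    intro a b c d
    have h1 : (fun ω : Fin k → X × ℝ => v (ω a) * v (ω b) * (u (ω c) * u (ω d)))
        = fun ω => ∏ e, Φ a b c d e (ω e) := funext (hrep a b c d)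
    rw [h1]
    exact integral_fintype_prod_eq_prod (ι := Fin k) (Φ a b c d)
  -- a.e. over the product measure, every label is 0/1
  have hae_pi : ∀ᵐ ω ∂π, ∀ c : Fin k, (ω c).2 = 0 ∨ (ω c).2 = 1 := by
    rw [MeasureTheory.ae_all_iff]
    intro c
    rw [ae_iff]
    have hnull : μ {z : X × ℝ | ¬(z.2 = 0 ∨ z.2 = 1)} = 0 := by
      rw [← ae_iff]; exact hy01
    have hset : {ω : Fin k → X × ℝ | ¬((ω c).2 = 0 ∨ (ω c).2 = 1)}
        = Function.eval c ⁻¹' {z : X × ℝ | ¬(z.2 = 0 ∨ z.2 = 1)} := rfl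
    rw [hπ, hset]
    exact Measure.pi_eval_preimage_null _ hnull
  set C : ℝ := Ef1 + p * Ef2 with hC_def
  set W : (Fin k → X × ℝ) → ℝ :=
    fun ω => (1 / (k : ℝ)) * ((∑ i, v (ω i)) * (∑ j, u (ω j))) with hW_def
  have hWeq : ∀ᵐ ω ∂π, ℓb ω = C + W ω := by
    filter_upwards [hae_pi] with ω hω
    have hv' : ∀ i, v (ω i) = (ω i).2 - p := by
      intro i; rcases hω i with h1 | h1 <;> simp [hv_def, h1]
    have h1 : ∑ i, v (ω i) = (∑ i, (ω i).2) - (k : ℝ) * p := by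
      simp only [hv']
      rw [Finset.sum_sub_distrib]
      simp [Finset.card_univ, mul_comm]
    have h2 : ∑ j, u (ω j) = (∑ j, f₂ (h ((ω j).1))) - (k : ℝ) * Ef2 := by
      simp only [hu_def, hg_def]
      rw [Finset.sum_sub_distrib]
      simp [Finset.card_univ, mul_comm]
    rw [hℓb ω]
    show C + (1 / (k : ℝ) * ∑ i, (ω i).2 - p) * ((∑ i, f₂ (h ((ω i).1))) - (k : ℝ) * Ef2)
        = C + (1 / (k : ℝ)) * ((∑ i, v (ω i)) * (∑ j, u (ω j)))
    rw [h1, h2]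
    field_simp
    try ring
  -- pairwise products are integrable over π
  set Ψ : Fin k → Fin k → Fin k → (X × ℝ) → ℝ := fun i j e z =>
    (if e = i then v z else 1) * (if e = j then u z else 1) with hΨ_def
  have hΨint : ∀ i j e, Integrable (Ψ i j e) μ := by
    intro i j e
    show Integrable (fun z => (if e = i then v z else 1) * (if e = j then u z else 1)) μ
    split_ifs <;> (try simp only [mul_one, one_mul]) <;>
      first
        | exact integrable_const 1
        | exact huint
        | exact hv_int
        | exact hvu_int
  have hrep2 : ∀ i j (ω : Fin k → X × ℝ), v (ω i) * u (ω j) = ∏ e, Ψ i j e (ω e) := by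
    intro i j ω
    show _ = ∏ e, ((if e = i then v (ω e) else 1) * (if e = j then u (ω e) else 1))
    rw [Finset.prod_mul_distrib]
    simp [Finset.prod_ite_eq']
  have hvu_pi : ∀ i j, Integrable (fun ω : Fin k → X × ℝ => v (ω i) * u (ω j)) π := by
    intro i j
    have h1 : (fun ω : Fin k → X × ℝ => v (ω i) * u (ω j)) = fun ω => ∏ e, Ψ i j e (ω e) :=
      funext (hrep2 i j)
    rw [h1]
    exact Integrable.fintype_prod (𝕜 := ℝ) fun e => hΨint i j e
  have hW_int : Integrable W π := by
    have h1 : W = fun ω => ∑ i, ∑ j, (1 / (k : ℝ)) * (v (ω i) * u (ω j)) := by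
      funext ω
      show (1 / (k : ℝ)) * ((∑ i, v (ω i)) * (∑ j, u (ω j))) = _
      rw [Finset.sum_mul_sum, Finset.mul_sum]
      refine Finset.sum_congr rfl fun i _ => ?_
      rw [Finset.mul_sum]
    rw [h1]
    exact integrable_finset_sum _ fun i _ => integrable_finset_sum _ fun j _ =>
      (hvu_pi i j).const_mul _
  -- expansion of the square of W
  have hWsq : ∀ ω : Fin k → X × ℝ, W ω ^ 2 = ∑ i, ∑ j, ∑ i', ∑ j',
      ((1 / (k : ℝ)) ^ 2) * (v (ω i) * v (ω i') * (u (ω j) * u (ω j'))) := by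
    intro ω
    have h0 : W ω ^ 2 = (1 / (k : ℝ)) ^ 2 * (((∑ i, v (ω i)) * (∑ i', v (ω i')))
        * ((∑ j, u (ω j)) * (∑ j', u (ω j')))) := by
      show ((1 / (k : ℝ)) * ((∑ i, v (ω i)) * (∑ j, u (ω j)))) ^ 2 = _
      ring
    rw [h0]
    simp only [Finset.sum_mul_sum]
    simp only [Finset.mul_sum]
  have hWsq_int : Integrable (fun ω => W ω ^ 2) π := by
    have h1 : (fun ω => W ω ^ 2) = fun ω => ∑ i, ∑ j, ∑ i', ∑ j',
        ((1 / (k : ℝ)) ^ 2) * (v (ω i) * v (ω i') * (u (ω j) * u (ω j'))) := funext hWsq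
    rw [h1]
    exact integrable_finset_sum _ fun i _ => integrable_finset_sum _ fun j _ =>
      integrable_finset_sum _ fun i' _ => integrable_finset_sum _ fun j' _ =>
        (hTint i i' j j').const_mul _
  have hIW2 : ∫ ω, W ω ^ 2 ∂π = ∑ i, ∑ j, ∑ i', ∑ j',
      ((1 / (k : ℝ)) ^ 2) * ∫ ω, v (ω i) * v (ω i') * (u (ω j) * u (ω j')) ∂π := by
    simp only [hWsq]
    rw [integral_finset_sum _ fun i _ => integrable_finset_sum _ fun j _ =>
      integrable_finset_sum _ fun i' _ => integrable_finset_sum _ fun j' _ =>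
        (hTint i i' j j').const_mul _]
    refine Finset.sum_congr rfl fun i _ => ?_
    rw [integral_finset_sum _ fun j _ => integrable_finset_sum _ fun i' _ =>
      integrable_finset_sum _ fun j' _ => (hTint i i' j j').const_mul _]
    refine Finset.sum_congr rfl fun j _ => ?_
    rw [integral_finset_sum _ fun i' _ => integrable_finset_sum _ fun j' _ =>
      (hTint i i' j j').const_mul _]
    refine Finset.sum_congr rfl fun i' _ => ?_
    rw [integral_finset_sum _ fun j' _ => (hTint i i' j j').const_mul _]
    refine Finset.sum_congr rfl fun j' _ => ?_
    rw [integral_const_mul]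
  -- helper lemmas to evaluate the factorized integrals
  have hzero : ∀ a b c d (e0 : Fin k),
      ((∀ z, Φ a b c d e0 z = u z) ∨ (∀ z, Φ a b c d e0 z = v z)) →
      ∫ ω, v (ω a) * v (ω b) * (u (ω c) * u (ω d)) ∂π = 0 := by
    intro a b c d e0 he
    rw [hTval a b c d]
    refine Finset.prod_eq_zero (Finset.mem_univ e0) ?_
    rcases he with he | he
    · simp only [he]; exact hu0
    · simp only [he]; exact hv0
  have hone : ∀ a b c d (x : Fin k) (φx : X × ℝ → ℝ),
      (∀ z, Φ a b c d x z = φx z) → (∀ e, e ≠ x → ∀ z, Φ a b c d e z = 1) →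
      ∫ ω, v (ω a) * v (ω b) * (u (ω c) * u (ω d)) ∂π = ∫ z, φx z ∂μ := by
    intro a b c d x φx hx hother
    rw [hTval a b c d]
    have hJ : ∀ e, ∫ z, Φ a b c d e z ∂μ = if e = x then ∫ z, φx z ∂μ else 1 := by
      intro e
      by_cases h1 : e = x
      · subst h1; rw [if_pos rfl]; simp only [hx]
      · rw [if_neg h1]; simp only [hother e h1]; simp
    simp only [hJ]
    simp [Finset.prod_ite_eq']
  have htwo : ∀ a b c d (x y : Fin k) (φx φy : X × ℝ → ℝ), x ≠ y →
      (∀ z, Φ a b c d x z = φx z) → (∀ z, Φ a b c d y z = φy z) →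
      (∀ e, e ≠ x → e ≠ y → ∀ z, Φ a b c d e z = 1) →
      ∫ ω, v (ω a) * v (ω b) * (u (ω c) * u (ω d)) ∂π
        = (∫ z, φx z ∂μ) * (∫ z, φy z ∂μ) := by
    intro a b c d x y φx φy hxy hx hy' hother
    rw [hTval a b c d]
    have hJ : ∀ e, ∫ z, Φ a b c d e z ∂μ
        = (if e = x then ∫ z, φx z ∂μ else 1) * (if e = y then ∫ z, φy z ∂μ else 1) := by
      intro e
      by_cases h1 : e = x
      · subst h1
        rw [if_pos rfl, if_neg hxy, mul_one]
        simp only [hx]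
      · by_cases h2 : e = y
        · subst h2
          rw [if_neg h1, if_pos rfl, one_mul]
          simp only [hy']
        · rw [if_neg h1, if_neg h2, mul_one]
          simp only [hother e h1 h2]
          simp
    simp only [hJ]
    rw [Finset.prod_mul_distrib]
    simp [Finset.prod_ite_eq']
  -- the majorant
  set MM : Fin k → Fin k → Fin k → Fin k → ℝ := fun a b c d =>
    (if b = a then (1:ℝ) else 0) * (if d = c then 1 else 0) * (σ2 / 4)
      + (if c = a then (1:ℝ) else 0) * (if d = b then 1 else 0) * σ2
      + (if c = b then (1:ℝ) else 0) * (if d = a then 1 else 0) * σ2 with hMM_def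
  have hMM_nonneg : ∀ a b c d, 0 ≤ MM a b c d := by
    intro a b c d
    show 0 ≤ (if b = a then (1:ℝ) else 0) * (if d = c then 1 else 0) * (σ2 / 4)
      + (if c = a then (1:ℝ) else 0) * (if d = b then 1 else 0) * σ2
      + (if c = b then (1:ℝ) else 0) * (if d = a then 1 else 0) * σ2
    have h4 : (0:ℝ) ≤ σ2 / 4 := by linarith
    refine add_nonneg (add_nonneg ?_ ?_) ?_ <;> split_ifs <;>
      simp [hσ2_nonneg, h4]
  have hTle : ∀ a b c d : Fin k,
      ∫ ω, v (ω a) * v (ω b) * (u (ω c) * u (ω d)) ∂π ≤ MM a b c d := by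
    intro a b c d
    have hMMsh : MM a b c d = (if b = a then (1:ℝ) else 0) * (if d = c then 1 else 0) * (σ2 / 4)
        + (if c = a then (1:ℝ) else 0) * (if d = b then 1 else 0) * σ2
        + (if c = b then (1:ℝ) else 0) * (if d = a then 1 else 0) * σ2 := rfl
    by_cases hba : b = a
    · by_cases hdc : d = c
      · by_cases hca : c = a
        · -- all four indices equal : T = τ4 ≤ σ2
          have hT := hone a b c d a (fun z => v z * v z * (u z * u z))
            (fun z => by
              show (if a = a then v z else 1) * (if a = b then v z else 1) *
                ((if a = c then u z else 1) * (if a = d then u z else 1))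
                  = v z * v z * (u z * u z)
              simp [hba, hdc, hca])
            (fun e he z => by
              show (if e = a then v z else 1) * (if e = b then v z else 1) *
                ((if e = c then u z else 1) * (if e = d then u z else 1)) = 1
              simp [hba, hdc, hca, he])
          rw [hT, ← hτ4_def, hMMsh]
          simp [hba, hdc, hca]
          linarith [hτ4_le, hσ2_nonneg]
        · -- a = b, c = d, a ≠ c : T = (∫ v²)(∫ u²) ≤ σ2/4
          have hca' : a ≠ c := fun h1 => hca h1.symm
          have hT := htwo a b c d a c (fun z => v z * v z) (fun z => u z * u z) hca'
            (fun z => by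
              show (if a = a then v z else 1) * (if a = b then v z else 1) *
                ((if a = c then u z else 1) * (if a = d then u z else 1)) = v z * v z
              simp [hba, hdc, hca, hca'])
            (fun z => by
              show (if c = a then v z else 1) * (if c = b then v z else 1) *
                ((if c = c then u z else 1) * (if c = d then u z else 1)) = u z * u z
              simp [hba, hdc, hca])
            (fun e he1 he2 z => by
              show (if e = a then v z else 1) * (if e = b then v z else 1) *
                ((if e = c then u z else 1) * (if e = d then u z else 1)) = 1
              simp [hba, hdc, he1, he2])
          rw [hT, ← hσ2_def, hMMsh]
          simp [hba, hdc, hca, hca']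
          nlinarith [hvv, hσ2_nonneg]
      · -- a = b, c ≠ d : one isolated u-factor, T = 0
        by_cases hca : c = a
        · have hda : ¬ d = a := fun h1 => hdc (h1.trans hca.symm)
          refine le_trans (le_of_eq (hzero a b c d d (Or.inl fun z => ?_))) (hMM_nonneg a b c d)
          show (if d = a then v z else 1) * (if d = b then v z else 1) *
            ((if d = c then u z else 1) * (if d = d then u z else 1)) = u z
          simp [hba, hda, hdc]
        · have hcd : ¬ c = d := fun h1 => hdc h1.symm
          refine le_trans (le_of_eq (hzero a b c d c (Or.inl fun z => ?_))) (hMM_nonneg a b c d)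
          show (if c = a then v z else 1) * (if c = b then v z else 1) *
            ((if c = c then u z else 1) * (if c = d then u z else 1)) = u z
          simp [hba, hca, hcd]
    · have hab : ¬ a = b := fun h1 => hba h1.symm
      by_cases hdc : d = c
      · -- a ≠ b, c = d : one isolated v-factor, T = 0
        by_cases hca : c = a
        · have hbc : ¬ b = c := fun h1 => hba (h1.trans hca)
          refine le_trans (le_of_eq (hzero a b c d b (Or.inr fun z => ?_))) (hMM_nonneg a b c d)
          show (if b = a then v z else 1) * (if b = b then v z else 1) *
            ((if b = c then u z else 1) * (if b = d then u z else 1)) = v z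
          simp [hba, hbc, hdc]
        · by_cases hcb : c = b
          · refine le_trans (le_of_eq (hzero a b c d a (Or.inr fun z => ?_))) (hMM_nonneg a b c d)
            show (if a = a then v z else 1) * (if a = b then v z else 1) *
              ((if a = c then u z else 1) * (if a = d then u z else 1)) = v z
            simp [hab, hcb, hdc, hba]
          · refine le_trans (le_of_eq (hzero a b c d a (Or.inr fun z => ?_))) (hMM_nonneg a b c d)
            have hac : ¬ a = c := fun h1 => hca h1.symm
            show (if a = a then v z else 1) * (if a = b then v z else 1) *
              ((if a = c then u z else 1) * (if a = d then u z else 1)) = v z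
            simp [hab, hac, hdc]
      · -- a ≠ b, c ≠ d
        by_cases hca : c = a
        · by_cases hdb : d = b
          · -- c = a, d = b : T = ρ²
            have hT := htwo a b c d a b (fun z => v z * u z) (fun z => v z * u z) hab
              (fun z => by
                show (if a = a then v z else 1) * (if a = b then v z else 1) *
                  ((if a = c then u z else 1) * (if a = d then u z else 1)) = v z * u z
                simp [hab, hca, hdb, hba])
              (fun z => by
                show (if b = a then v z else 1) * (if b = b then v z else 1) *
                  ((if b = c then u z else 1) * (if b = d then u z else 1)) = v z * u z
                simp [hba, hca, hdb])
              (fun e he1 he2 z => by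
                show (if e = a then v z else 1) * (if e = b then v z else 1) *
                  ((if e = c then u z else 1) * (if e = d then u z else 1)) = 1
                simp [hca, hdb, he1, he2])
            rw [hT, ← hρ_def, hMMsh]
            simp [hba, hca, hdb, hab]
            nlinarith [hρ2]
          · -- d isolated
            have hda : ¬ d = a := fun h1 => hdc (h1.trans hca.symm)
            refine le_trans (le_of_eq (hzero a b c d d (Or.inl fun z => ?_))) (hMM_nonneg a b c d)
            show (if d = a then v z else 1) * (if d = b then v z else 1) *
              ((if d = c then u z else 1) * (if d = d then u z else 1)) = u z
            simp [hda, hdb, hdc]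
        · by_cases hcb : c = b
          · by_cases hda : d = a
            · -- c = b, d = a : T = ρ²
              have hT := htwo a b c d a b (fun z => v z * u z) (fun z => v z * u z) hab
                (fun z => by
                  show (if a = a then v z else 1) * (if a = b then v z else 1) *
                    ((if a = c then u z else 1) * (if a = d then u z else 1)) = v z * u z
                  simp [hab, hcb, hda, hba])
                (fun z => by
                  show (if b = a then v z else 1) * (if b = b then v z else 1) *
                    ((if b = c then u z else 1) * (if b = d then u z else 1)) = v z * u z
                  simp [hba, hcb, hda])
                (fun e he1 he2 z => by
                  show (if e = a then v z else 1) * (if e = b then v z else 1) *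
                    ((if e = c then u z else 1) * (if e = d then u z else 1)) = 1
                  simp [hcb, hda, he1, he2])
              rw [hT, ← hρ_def, hMMsh]
              simp [hba, hcb, hda, hab]
              nlinarith [hρ2]
            · -- d isolated
              have hdb : ¬ d = b := fun h1 => hdc (h1.trans hcb.symm)
              refine le_trans (le_of_eq (hzero a b c d d (Or.inl fun z => ?_)))
                (hMM_nonneg a b c d)
              show (if d = a then v z else 1) * (if d = b then v z else 1) *
                ((if d = c then u z else 1) * (if d = d then u z else 1)) = u z
              simp [hda, hdb, hdc]
          · -- c isolated
            have hcd : ¬ c = d := fun h1 => hdc h1.symm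
            refine le_trans (le_of_eq (hzero a b c d c (Or.inl fun z => ?_))) (hMM_nonneg a b c d)
            show (if c = a then v z else 1) * (if c = b then v z else 1) *
              ((if c = c then u z else 1) * (if c = d then u z else 1)) = u z
            simp [hca, hcb, hcd]
  -- summing the majorant
  have hsum_le : ∫ ω, W ω ^ 2 ∂π ≤ 9 / 4 * σ2 := by
    rw [hIW2]
    have hc : (0:ℝ) ≤ (1 / (k:ℝ)) ^ 2 := by positivity
    have step1 : (∑ i : Fin k, ∑ j : Fin k, ∑ i' : Fin k, ∑ j' : Fin k,
        ((1 / (k:ℝ)) ^ 2) * ∫ ω, v (ω i) * v (ω i') * (u (ω j) * u (ω j')) ∂π)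
        ≤ ∑ i : Fin k, ∑ j : Fin k, ∑ i' : Fin k, ∑ j' : Fin k,
          ((1 / (k:ℝ)) ^ 2) * MM i i' j j' :=
      Finset.sum_le_sum fun i _ => Finset.sum_le_sum fun j _ => Finset.sum_le_sum fun i' _ =>
        Finset.sum_le_sum fun j' _ => mul_le_mul_of_nonneg_left (hTle i i' j j') hc
    refine le_trans step1 ?_
    have step2 : (∑ i : Fin k, ∑ j : Fin k, ∑ i' : Fin k, ∑ j' : Fin k,
        ((1 / (k:ℝ)) ^ 2) * MM i i' j j')
        = ((1 / (k:ℝ)) ^ 2) * ((k:ℝ) ^ 2 * (σ2 / 4) + ((k:ℝ) ^ 2 * σ2 + (k:ℝ) ^ 2 * σ2)) := by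
      simp only [hMM_def]
      simp only [mul_add, ite_mul, one_mul, zero_mul, mul_ite, mul_zero, mul_one]
      simp only [Finset.sum_add_distrib]
      simp only [Finset.sum_ite_eq', Finset.mem_univ, if_true]
      simp only [Finset.sum_const, Finset.card_univ, Fintype.card_fin, nsmul_eq_mul]
      simp only [mul_ite, mul_zero, Finset.sum_ite_eq, Finset.sum_ite_eq', Finset.mem_univ,
        if_true, Finset.sum_const, Finset.card_univ, Fintype.card_fin, nsmul_eq_mul]
      push_cast
      ring
    rw [step2]
    have hkey : ((1 / (k:ℝ)) ^ 2) * ((k:ℝ) ^ 2 * (σ2 / 4) + ((k:ℝ) ^ 2 * σ2 + (k:ℝ) ^ 2 * σ2))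
        = 9 / 4 * σ2 := by
      field_simp
      ring
    rw [hkey]
  -- reduce variance to second moment about C
  have hℓb_int : Integrable ℓb π := by
    have h1 : Integrable (fun ω => C + W ω) π := (integrable_const C).add hW_int
    exact h1.congr (hWeq.mono fun ω hω => hω.symm)
  set m : ℝ := ∫ ω', ℓb ω' ∂π with hm_def
  have hsub_int : Integrable (fun ω => ℓb ω - C) π := hℓb_int.sub (integrable_const C)
  have hsubsq_int : Integrable (fun ω => (ℓb ω - C) ^ 2) π := by
    apply hWsq_int.congr
    filter_upwards [hWeq] with ω hω
    rw [hω]; ring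
  have hmC : ∫ ω, (ℓb ω - C) ∂π = m - C := by
    rw [integral_sub hℓb_int (integrable_const C)]
    simp [hm_def]
  have hvar : ∫ ω, (ℓb ω - m) ^ 2 ∂π ≤ ∫ ω, (ℓb ω - C) ^ 2 ∂π := by
    have hexp : ∀ ω, (ℓb ω - m) ^ 2
        = (ℓb ω - C) ^ 2 - (2 * (m - C)) * (ℓb ω - C) + (m - C) ^ 2 := by
      intro ω; ring
    calc ∫ ω, (ℓb ω - m) ^ 2 ∂π
        = ∫ ω, ((ℓb ω - C) ^ 2 - (2 * (m - C)) * (ℓb ω - C) + (m - C) ^ 2) ∂π := by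
          simp only [hexp]
      _ = ∫ ω, ((ℓb ω - C) ^ 2 - (2 * (m - C)) * (ℓb ω - C)) ∂π + (m - C) ^ 2 := by
          have hA : Integrable (fun ω => (ℓb ω - C) ^ 2 - (2 * (m - C)) * (ℓb ω - C)) π :=
            hsubsq_int.sub (hsub_int.const_mul _)
          rw [integral_add hA (integrable_const _)]
          simp
      _ = ∫ ω, (ℓb ω - C) ^ 2 ∂π - (2 * (m - C)) * (m - C) + (m - C) ^ 2 := by
          rw [integral_sub hsubsq_int (hsub_int.const_mul _), integral_const_mul, hmC]
      _ ≤ ∫ ω, (ℓb ω - C) ^ 2 ∂π := by nlinarith [sq_nonneg (m - C)]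
  have hCW : ∫ ω, (ℓb ω - C) ^ 2 ∂π = ∫ ω, W ω ^ 2 ∂π := by
    apply integral_congr_ae
    filter_upwards [hWeq] with ω hω
    rw [hω]; ring
  have hgg : (∫ z, g z ^ 2 ∂μ) = ∫ z, (f₂ (h z.1)) ^ 2 ∂μ := by simp only [hg_def]
  have hg2_nonneg : 0 ≤ ∫ z, g z ^ 2 ∂μ := le_trans hσ2_nonneg hσ2_le
  calc ∫ ω, (ℓb ω - m) ^ 2 ∂π ≤ ∫ ω, (ℓb ω - C) ^ 2 ∂π := hvar
    _ = ∫ ω, W ω ^ 2 ∂π := hCW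
    _ ≤ 9 / 4 * σ2 := hsum_le
    _ ≤ 5 / 2 * ∫ z, (f₂ (h z.1)) ^ 2 ∂μ := by rw [← hgg]; nlinarith [hσ2_le, hg2_nonneg]
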